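/- Let Φ : ℝ^m → ℝ and Ψ : ℝ^n → ℝ be the continuous negative definite functions associated to finite symmetric Lévy measures with full support, and let (x₁,y₁),…,(x_N,y_N) be a sample in ℝ^m × ℝ^n. Define the sample generalized distance covariance V̂_N² := (1/N⁴) Σ_{i,j,k,l=1}^N [Φ(x_i − x_k) Ψ(y_i − y_k) − 2 Φ(x_i − x_j) Ψ(y_i − y_l) + Φ(x_i − x_j) Ψ(y_k − y_l)]. Then V̂_N² = (1/N²) trace(Bᵀ A) = (1/N²) Σ_{k,l=1}^N A_{kl} B_{kl}, where A = Cᵀ a C with a = (Φ(x_k − x_l))_{k,l=1,…,N}, B = Cᵀ b C with b = (Ψ(y_k − y_l))_{k,l=1,…,N}, and C = I − (1/N) 𝟙 with 𝟙 the N×N all-ones matrix and I the N×N identity matrix. -/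
import Mathlib


open MeasureTheory Matrix
open scoped ENNReal RealInnerProductSpace

/-- `ρ` is symmetric: `ρ(B) = ρ(-B)` for all Borel sets `B`. -/
def IsSymmetricMeasure {d : ℕ} (ρ : Measure (EuclideanSpace ℝ (Fin d))) : Prop :=
  ρ.map (fun r => -r) = ρ

/-- `ρ` has full (topological) support on `ℝ^d ∖ {0}`. -/
def HasFullSupportOffZero {d : ℕ} (ρ : Measure (EuclideanSpace ℝ (Fin d))) : Prop :=
  ∀ G : Set (EuclideanSpace ℝ (Fin d)), IsOpen G → G.Nonempty →
    (0 : EuclideanSpace ℝ (Fin d)) ∉ G → 0 < ρ G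

/-- The centering matrix `C = I - N⁻¹ 𝟙`. -/
noncomputable def gdCovCC (N : ℕ) : Matrix (Fin N) (Fin N) ℝ :=
  1 - (N:ℝ)⁻¹ • Matrix.of fun _ _ => (1:ℝ)

lemma gdCov_left_mul_C {N : ℕ} (M : Matrix (Fin N) (Fin N) ℝ) (k q : Fin N) :
    ((gdCovCC N)ᵀ * M) k q = M k q - (N:ℝ)⁻¹ * ∑ p, M p q := by
  simp only [gdCovCC, Matrix.mul_apply, Matrix.transpose_apply, Matrix.sub_apply,
    Matrix.smul_apply, Matrix.one_apply, Matrix.of_apply, smul_eq_mul, mul_one, sub_mul,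
    ite_mul, one_mul, zero_mul, Finset.sum_sub_distrib, Finset.sum_ite_eq, Finset.sum_ite_eq',
    Finset.mem_univ, if_true, Finset.mul_sum]

lemma gdCov_right_mul_C {N : ℕ} (M : Matrix (Fin N) (Fin N) ℝ) (k l : Fin N) :
    (M * gdCovCC N) k l = M k l - (N:ℝ)⁻¹ * ∑ q, M k q := by
  simp only [gdCovCC, Matrix.mul_apply, Matrix.sub_apply, Matrix.smul_apply,
    Matrix.one_apply, Matrix.of_apply, smul_eq_mul, mul_one, mul_sub, mul_ite, mul_zero,
    Finset.sum_sub_distrib, Finset.sum_ite_eq, Finset.sum_ite_eq', Finset.mem_univ, if_true,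
    Finset.mul_sum]
  simp [mul_comm]

lemma gdCov_centered_apply {N : ℕ} (M : Matrix (Fin N) (Fin N) ℝ) (k l : Fin N) :
    ((gdCovCC N)ᵀ * M * gdCovCC N) k l
    = M k l - (N:ℝ)⁻¹ * (∑ q, M k q) - (N:ℝ)⁻¹ * (∑ p, M p l)
      + (N:ℝ)⁻¹ ^ 2 * ∑ p, ∑ q, M p q := by
  rw [gdCov_right_mul_C, gdCov_left_mul_C]
  have h2 : ∑ q : Fin N, ((gdCovCC N)ᵀ * M) k q
      = (∑ q, M k q) - (N:ℝ)⁻¹ * ∑ p, ∑ q, M p q := by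
    simp only [gdCov_left_mul_C, Finset.sum_sub_distrib, ← Finset.mul_sum]
    rw [Finset.sum_comm]
  rw [h2]
  ring

lemma gdCov_centered_row_sum {N : ℕ} (hN : (N:ℝ) ≠ 0) (M : Matrix (Fin N) (Fin N) ℝ)
    (k : Fin N) : ∑ l, ((gdCovCC N)ᵀ * M * gdCovCC N) k l = 0 := by
  simp only [gdCov_centered_apply, Finset.sum_add_distrib, Finset.sum_sub_distrib,
    Finset.sum_const, Finset.card_univ, Fintype.card_fin, nsmul_eq_mul, ← Finset.mul_sum]
  rw [Finset.sum_comm]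
  field_simp
  ring

lemma gdCov_centered_col_sum {N : ℕ} (hN : (N:ℝ) ≠ 0) (M : Matrix (Fin N) (Fin N) ℝ)
    (l : Fin N) : ∑ k, ((gdCovCC N)ᵀ * M * gdCovCC N) k l = 0 := by
  simp only [gdCov_centered_apply, Finset.sum_add_distrib, Finset.sum_sub_distrib,
    Finset.sum_const, Finset.card_univ, Fintype.card_fin, nsmul_eq_mul, ← Finset.mul_sum]
  field_simp
  ring

lemma gdCov_dot_centered {N : ℕ} (hN : (N:ℝ) ≠ 0) (M M' : Matrix (Fin N) (Fin N) ℝ) :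
    ∑ k, ∑ l, ((gdCovCC N)ᵀ * M * gdCovCC N) k l * ((gdCovCC N)ᵀ * M' * gdCovCC N) k l
    = (∑ k, ∑ l, M k l * M' k l)
      - (N:ℝ)⁻¹ * ∑ k, (∑ l, M k l) * (∑ l, M' k l)
      - (N:ℝ)⁻¹ * ∑ l, (∑ k, M k l) * (∑ k, M' k l)
      + (N:ℝ)⁻¹ ^ 2 * (∑ k, ∑ l, M k l) * (∑ k, ∑ l, M' k l) := by
  set A := (gdCovCC N)ᵀ * M * gdCovCC N with hA
  set c := (N:ℝ)⁻¹ with hc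
  have step1 : ∑ k, ∑ l, A k l * ((gdCovCC N)ᵀ * M' * gdCovCC N) k l
      = ∑ k, ∑ l, A k l * M' k l := by
    have expand : ∀ k l, A k l * ((gdCovCC N)ᵀ * M' * gdCovCC N) k l
        = A k l * M' k l - (c * (∑ q, M' k q)) * A k l - (c * (∑ p, M' p l)) * A k l
          + (c ^ 2 * ∑ p, ∑ q, M' p q) * A k l := by
      intro k l; rw [gdCov_centered_apply]; ring
    simp only [expand, Finset.sum_sub_distrib, Finset.sum_add_distrib]
    have e1 : ∀ k, ∑ l, (c * (∑ q, M' k q)) * A k l = 0 := by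
      intro k; rw [← Finset.mul_sum, gdCov_centered_row_sum hN, mul_zero]
    have e2 : ∑ k, ∑ l, (c * (∑ p, M' p l)) * A k l = 0 := by
      rw [Finset.sum_comm]
      refine Finset.sum_eq_zero fun l _ => ?_
      rw [← Finset.mul_sum, gdCov_centered_col_sum hN, mul_zero]
    have e3 : ∑ k, ∑ l, (c ^ 2 * ∑ p, ∑ q, M' p q) * A k l = 0 := by
      refine Finset.sum_eq_zero fun k _ => ?_
      rw [← Finset.mul_sum, gdCov_centered_row_sum hN, mul_zero]
    simp only [e1, Finset.sum_const_zero, e2, e3, sub_zero, add_zero]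
  rw [step1]
  have expand2 : ∀ k l, A k l * M' k l
      = M k l * M' k l - (c * (∑ q, M k q)) * M' k l - (c * (∑ p, M p l)) * M' k l
        + (c ^ 2 * ∑ p, ∑ q, M p q) * M' k l := by
    intro k l; rw [hA, gdCov_centered_apply]; ring
  simp only [expand2, Finset.sum_sub_distrib, Finset.sum_add_distrib]
  have f1 : ∑ k, ∑ l, (c * (∑ q, M k q)) * M' k l
      = c * ∑ k, (∑ l, M k l) * (∑ l, M' k l) := by
    rw [Finset.mul_sum]
    refine Finset.sum_congr rfl fun k _ => ?_
    rw [← Finset.mul_sum]; ring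
  have f2 : ∑ k, ∑ l, (c * (∑ p, M p l)) * M' k l
      = c * ∑ l, (∑ k, M k l) * (∑ k, M' k l) := by
    rw [Finset.sum_comm, Finset.mul_sum]
    refine Finset.sum_congr rfl fun l _ => ?_
    rw [← Finset.mul_sum]; ring
  have f3 : ∑ k, ∑ l, (c ^ 2 * ∑ p, ∑ q, M p q) * M' k l
      = c ^ 2 * (∑ k, ∑ l, M k l) * (∑ k, ∑ l, M' k l) := by
    simp only [← Finset.mul_sum]; try ring
  rw [f1, f2, f3]
  try ring

lemma gdCov_quad_sum {N : ℕ} (f g : Fin N → Fin N → ℝ) :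
    ∑ i, ∑ j, ∑ k, ∑ l, (f i k * g i k - 2 * f i j * g i l + f i j * g k l)
    = (N:ℝ)^2 * (∑ k, ∑ l, f k l * g k l)
      - 2 * (N:ℝ) * ∑ i, (∑ j, f i j) * (∑ l, g i l)
      + (∑ k, ∑ l, f k l) * (∑ k, ∑ l, g k l) := by
  simp only [Finset.sum_add_distrib, Finset.sum_sub_distrib]
  have q1 : ∑ i, ∑ _j : Fin N, ∑ k, ∑ _l : Fin N, f i k * g i k
      = (N:ℝ)^2 * ∑ k, ∑ l, f k l * g k l := by
    simp only [Finset.sum_const, Finset.card_univ, Fintype.card_fin, nsmul_eq_mul,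
      ← Finset.mul_sum]
    have h0 : ∑ k, ∑ l, f k l * g k l = ∑ i, ∑ k, f i k * g i k := rfl
    rw [h0]; ring
  have q2 : ∑ i, ∑ j, ∑ _k : Fin N, ∑ l, 2 * f i j * g i l
      = 2 * (N:ℝ) * ∑ i, (∑ j, f i j) * (∑ l, g i l) := by
    have h : ∀ i : Fin N, ∑ j, ∑ _k : Fin N, ∑ l, 2 * f i j * g i l
        = (N:ℝ) * (2 * ((∑ j, f i j) * (∑ l, g i l))) := by
      intro i
      have hinner : ∀ j : Fin N, (∑ _k : Fin N, ∑ l, 2 * f i j * g i l)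
          = (N:ℝ) * (2 * f i j * ∑ l, g i l) := by
        intro j
        rw [← Finset.mul_sum, Finset.sum_const, Finset.card_univ, Fintype.card_fin,
          nsmul_eq_mul]
      calc ∑ j, ∑ _k : Fin N, ∑ l, 2 * f i j * g i l
          = ∑ j, ((N:ℝ) * 2 * (∑ l, g i l)) * f i j :=
            Finset.sum_congr rfl fun j _ => by rw [hinner j]; ring
        _ = (N:ℝ) * (2 * ((∑ j, f i j) * (∑ l, g i l))) := by
            rw [← Finset.mul_sum]; ring
    calc ∑ i, ∑ j, ∑ _k : Fin N, ∑ l, 2 * f i j * g i l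
        = ∑ i, (N:ℝ) * (2 * ((∑ j, f i j) * ∑ l, g i l)) :=
          Finset.sum_congr rfl fun i _ => h i
      _ = 2 * (N:ℝ) * ∑ i, (∑ j, f i j) * (∑ l, g i l) := by
          simp only [← Finset.mul_sum]; ring
  have q3 : ∑ i, ∑ j, ∑ k, ∑ l, f i j * g k l
      = (∑ k, ∑ l, f k l) * (∑ k, ∑ l, g k l) := by
    simp only [← Finset.sum_mul, ← Finset.mul_sum]
  rw [q1, q2, q3]

lemma gdCov_key {N : ℕ} (f g : Fin N → Fin N → ℝ)
    (hf : ∀ k l, f k l = f l k) (hg : ∀ k l, g k l = g l k) :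
    (1 / (N:ℝ)^4) * ∑ i, ∑ j, ∑ k, ∑ l,
        (f i k * g i k - 2 * f i j * g i l + f i j * g k l)
    = (1 / (N:ℝ)^2) * ∑ k, ∑ l,
        ((gdCovCC N)ᵀ * Matrix.of f * gdCovCC N) k l *
        ((gdCovCC N)ᵀ * Matrix.of g * gdCovCC N) k l := by
  rcases Nat.eq_zero_or_pos N with h0 | hpos
  · subst h0; simp
  have hN : (N:ℝ) ≠ 0 := Nat.cast_ne_zero.mpr hpos.ne'
  rw [gdCov_quad_sum, gdCov_dot_centered hN]
  simp only [Matrix.of_apply]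
  have e : ∑ l, (∑ k, f k l) * (∑ k, g k l) = ∑ k, (∑ l, f k l) * (∑ l, g k l) := by
    refine Finset.sum_congr rfl fun l _ => ?_
    rw [Finset.sum_congr rfl fun k _ => hf k l, Finset.sum_congr rfl fun k _ => hg k l]
  rw [e]
  field_simp
  ring

lemma gdCov_trace_eq {N : ℕ} (A B : Matrix (Fin N) (Fin N) ℝ) :
    Matrix.trace (Bᵀ * A) = ∑ k, ∑ l, A k l * B k l := by
  rw [Matrix.trace]
  simp only [Matrix.diag, Matrix.mul_apply, Matrix.transpose_apply]
  rw [Finset.sum_comm]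
  exact Finset.sum_congr rfl fun k _ => Finset.sum_congr rfl fun l _ => mul_comm _ _

/-- Let `Φ, Ψ` be the cndfs of finite symmetric Lévy measures with full support, and
`(x₁,y₁), …, (x_N,y_N)` a sample. The sample generalized distance covariance
`V̂_N² = N⁻⁴ Σ_{i,j,k,l} [Φ(x_i-x_k)Ψ(y_i-y_k) - 2Φ(x_i-x_j)Ψ(y_i-y_l) + Φ(x_i-x_j)Ψ(y_k-y_l)]`
equals `N⁻² trace(Bᵀ A) = N⁻² Σ_{k,l} A_{kl} B_{kl}` with `A = Cᵀ a C`, `B = Cᵀ b C`,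
`a = (Φ(x_k - x_l))_{k,l}`, `b = (Ψ(y_k - y_l))_{k,l}` and `C = I - N⁻¹ 𝟙`. -/
theorem sample_gdCov_matrix_repr {m n : ℕ}
    (μ : Measure (EuclideanSpace ℝ (Fin m))) (ν : Measure (EuclideanSpace ℝ (Fin n)))
    [IsFiniteMeasure μ] [IsFiniteMeasure ν]
    (hμ0 : μ {0} = 0) (hν0 : ν {0} = 0)
    (hμsym : IsSymmetricMeasure μ) (hνsym : IsSymmetricMeasure ν)
    (hμfull : HasFullSupportOffZero μ) (hνfull : HasFullSupportOffZero ν)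
    (Φ : EuclideanSpace ℝ (Fin m) → ℝ) (Ψ : EuclideanSpace ℝ (Fin n) → ℝ)
    (hΦ : ∀ x, Φ x = ∫ s, (1 - Real.cos ⟪x, s⟫) ∂μ)
    (hΨ : ∀ y, Ψ y = ∫ t, (1 - Real.cos ⟪y, t⟫) ∂ν)
    (N : ℕ) (x : Fin N → EuclideanSpace ℝ (Fin m))
    (y : Fin N → EuclideanSpace ℝ (Fin n)) :
    let a : Matrix (Fin N) (Fin N) ℝ := Matrix.of fun k l => Φ (x k - x l)
    let b : Matrix (Fin N) (Fin N) ℝ := Matrix.of fun k l => Ψ (y k - y l)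
    let C : Matrix (Fin N) (Fin N) ℝ := 1 - (N : ℝ)⁻¹ • Matrix.of fun _ _ => (1 : ℝ)
    let A : Matrix (Fin N) (Fin N) ℝ := Cᵀ * a * C
    let B : Matrix (Fin N) (Fin N) ℝ := Cᵀ * b * C
    (1 / (N : ℝ) ^ 4) * ∑ i, ∑ j, ∑ k, ∑ l,
        (Φ (x i - x k) * Ψ (y i - y k) - 2 * Φ (x i - x j) * Ψ (y i - y l)
          + Φ (x i - x j) * Ψ (y k - y l))
      = (1 / (N : ℝ) ^ 2) * Matrix.trace (Bᵀ * A) ∧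
    (1 / (N : ℝ) ^ 4) * ∑ i, ∑ j, ∑ k, ∑ l,
        (Φ (x i - x k) * Ψ (y i - y k) - 2 * Φ (x i - x j) * Ψ (y i - y l)
          + Φ (x i - x j) * Ψ (y k - y l))
      = (1 / (N : ℝ) ^ 2) * ∑ k, ∑ l, A k l * B k l := by
  intro a b C A B
  have hf : ∀ k l : Fin N, Φ (x k - x l) = Φ (x l - x k) := by
    intro k l
    rw [hΦ, hΦ]
    congr 1
    funext s
    rw [show x k - x l = -(x l - x k) by abel, inner_neg_left, Real.cos_neg]
  have hg : ∀ k l : Fin N, Ψ (y k - y l) = Ψ (y l - y k) := by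
    intro k l
    rw [hΨ, hΨ]
    congr 1
    funext t
    rw [show y k - y l = -(y l - y k) by abel, inner_neg_left, Real.cos_neg]
  have key : (1 / (N : ℝ) ^ 4) * ∑ i, ∑ j, ∑ k, ∑ l,
        (Φ (x i - x k) * Ψ (y i - y k) - 2 * Φ (x i - x j) * Ψ (y i - y l)
          + Φ (x i - x j) * Ψ (y k - y l))
      = (1 / (N : ℝ) ^ 2) * ∑ k, ∑ l, A k l * B k l :=
    gdCov_key (fun k l => Φ (x k - x l)) (fun k l => Ψ (y k - y l)) hf hg
  exact ⟨by rw [gdCov_trace_eq]; exact key, key⟩
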